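/- arXiv:1906.02715 — 4 statements merged into one kernel-verified Lean document; each statement's English description precedes it below -/
import Mathlib

section
/- Any finite tree with n vertices admits a Pythagorean embedding into ℝ^{n-1}; that is, there exists a map f from the vertex set of the tree to ℝ^{n-1} such that for all vertices x, y, ‖f(x) − f(y)‖² = d(x, y), where d is the tree metric. -/
open SimpleGraph Walk Finset

namespace TreePyth

variable {V : Type*} {G : SimpleGraph V}

lemma path_length_eq_dist (hG : G.IsTree) {x y : V} (p : G.Walk x y) (hp : p.IsPath) :
    p.length = G.dist x y := by
  obtain ⟨q, hq, hql⟩ := hG.isConnected.exists_path_of_dist x y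
  rw [(hG.existsUnique_path x y).unique hp hq, hql]

lemma half [DecidableEq (Sym2 V)] (hG : G.IsTree) {r x y : V} (hxy : G.Adj x y)
    {px : G.Walk r x} {py : G.Walk r y} (hpx : px.IsPath) (hpy : py.IsPath)
    (h : y ∉ px.support) :
    py.edges.toFinset = symmDiff px.edges.toFinset {s(x, y)} := by
  have hnot : s(x, y) ∉ px.edges := fun hc => h (px.snd_mem_support_of_mem_edges hc)
  have hconcat : (px.concat hxy).IsPath := by
    apply Walk.IsPath.mk'
    rw [Walk.support_concat, List.nodup_append]
    exact ⟨hpx.support_nodup, List.nodup_singleton y, by simpa using fun a (ha : a ∈ px.support) (hay : a = y) => h (hay ▸ ha)⟩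
  have heq : py = px.concat hxy := (hG.existsUnique_path r y).unique hpy hconcat
  have hdisj : Disjoint px.edges.toFinset ({s(x, y)} : Finset (Sym2 V)) := by
    simpa using fun hc => hnot (List.mem_toFinset.mp hc)
  rw [hdisj.symmDiff_eq_sup, heq, Walk.edges_concat]
  ext e
  simp [List.concat_eq_append, or_comm]

lemma adj_step [DecidableEq V] [DecidableEq (Sym2 V)] (hG : G.IsTree) {r x y : V} (hxy : G.Adj x y)
    {px : G.Walk r x} {py : G.Walk r y} (hpx : px.IsPath) (hpy : py.IsPath) :
    symmDiff px.edges.toFinset py.edges.toFinset = {s(x, y)} := by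
  by_cases h : y ∈ px.support
  · have hx : x ∉ py.support := by
      intro hx
      have e2 : py = px.takeUntil y h :=
        (hG.existsUnique_path r y).unique hpy (hpx.takeUntil h)
      have e1 : px = py.takeUntil x hx :=
        (hG.existsUnique_path r x).unique hpx (hpy.takeUntil hx)
      have l1 : px.length ≤ py.length := e1 ▸ py.length_takeUntil_le hx
      have hspec := congrArg Walk.length (px.take_spec h)
      rw [Walk.length_append, ← e2] at hspec
      have hzero : (px.dropUntil y h).length = 0 := by omega
      exact hxy.ne' (Walk.eq_of_length_eq_zero hzero)
    have := half hG hxy.symm hpy hpx hx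
    rw [this, Sym2.eq_swap, symmDiff_comm py.edges.toFinset ({s(x, y)} : Finset (Sym2 V)),
      symmDiff_symmDiff_cancel_right]
  · rw [half hG hxy hpx hpy h, symmDiff_symmDiff_cancel_left]

lemma chain [DecidableEq V] [DecidableEq (Sym2 V)] (hG : G.IsTree) {r : V}
    (P : ∀ v, G.Walk r v) (hP : ∀ v, (P v).IsPath) :
    ∀ {x y : V} (p : G.Walk x y), p.IsPath →
      symmDiff (P x).edges.toFinset (P y).edges.toFinset = p.edges.toFinset := by
  intro x y p
  induction p with
  | nil => intro _; simp [symmDiff_self]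
  | @cons x v y h q ih =>
    intro hp
    have hq : q.IsPath := hp.of_cons
    have hstep : symmDiff (P x).edges.toFinset (P v).edges.toFinset = {s(x, v)} :=
      adj_step hG h (hP x) (hP v)
    have key : symmDiff (P x).edges.toFinset (P y).edges.toFinset
        = symmDiff ({s(x, v)} : Finset (Sym2 V)) q.edges.toFinset := by
      rw [← hstep, ← ih hq, symmDiff_assoc, symmDiff_symmDiff_cancel_left]
    have hnot : s(x, v) ∉ q.edges := by
      have := hp.isTrail.edges_nodup
      rw [Walk.edges_cons, List.nodup_cons] at this
      exact this.1
    have hdisj : Disjoint ({s(x, v)} : Finset (Sym2 V)) q.edges.toFinset := by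
      simpa using fun hc => hnot (List.mem_toFinset.mp hc)
    rw [key, hdisj.symmDiff_eq_sup, Walk.edges_cons, List.toFinset_cons]
    ext e
    simp [or_comm]

end TreePyth

/-- Any finite tree with `n` vertices admits a Pythagorean embedding into
`ℝ^(n-1)`: there is a map `f` from the vertices to `EuclideanSpace ℝ (Fin (n-1))` such that
`‖f x - f y‖² = d(x, y)` for all vertices `x y`, where `d` is the tree (shortest-path) metric. -/
theorem tree_pythagorean_embedding {V : Type*} [Fintype V] (G : SimpleGraph V)
    (hG : G.IsTree) (n : ℕ) (hn : Fintype.card V = n) :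
    ∃ f : V → EuclideanSpace ℝ (Fin (n - 1)),
      ∀ x y : V, ‖f x - f y‖ ^ 2 = (G.dist x y : ℝ) := by
  classical
  have hne : Nonempty V := hG.isConnected.nonempty
  obtain ⟨r⟩ := hne
  choose P hP using fun v => (hG.existsUnique_path r v).exists
  -- the edge finset and the index equivalence
  have hcard : Fintype.card ↥G.edgeFinset = n - 1 := by
    rw [Fintype.card_coe]
    have := hG.card_edgeFinset
    omega
  obtain ⟨e⟩ : Nonempty (↥G.edgeFinset ≃ Fin (n - 1)) :=
    ⟨Fintype.equivFinOfCardEq hcard⟩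
  set E : V → Finset (Sym2 V) := fun v => (P v).edges.toFinset with hE
  refine ⟨fun v => WithLp.toLp 2 (fun i => if ((e.symm i : Sym2 V) ∈ E v) then (1 : ℝ) else 0), ?_⟩
  intro x y
  obtain ⟨p, hp⟩ := (hG.existsUnique_path x y).exists
  have hsymm : symmDiff (E x) (E y) = p.edges.toFinset :=
    TreePyth.chain hG P hP p hp
  have hdist : (p.edges.toFinset).card = G.dist x y := by
    rw [← TreePyth.path_length_eq_dist hG p hp, ← Walk.length_edges,
      List.toFinset_card_of_nodup hp.isTrail.edges_nodup]
  have hsub : symmDiff (E x) (E y) ⊆ G.edgeFinset := by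
    rw [hsymm]
    intro s hs
    exact mem_edgeFinset.mpr (p.edges_subset_edgeSet (List.mem_toFinset.mp hs))
  rw [EuclideanSpace.norm_eq, Real.sq_sqrt (by positivity)]
  have hterm : ∀ i : Fin (n - 1),
      ‖(if ((e.symm i : Sym2 V) ∈ E x) then (1 : ℝ) else 0)
        - (if ((e.symm i : Sym2 V) ∈ E y) then (1 : ℝ) else 0)‖ ^ 2
      = if (e.symm i : Sym2 V) ∈ symmDiff (E x) (E y) then (1 : ℝ) else 0 := by
    intro i
    by_cases h1 : (e.symm i : Sym2 V) ∈ E x <;> by_cases h2 : (e.symm i : Sym2 V) ∈ E y <;>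
      simp [h1, h2, Finset.mem_symmDiff]
  have : ∀ i : Fin (n - 1),
      ‖((fun v => WithLp.toLp 2 (fun i => if ((e.symm i : Sym2 V) ∈ E v) then (1 : ℝ) else 0)) x
        - (fun v => WithLp.toLp 2 (fun i => if ((e.symm i : Sym2 V) ∈ E v) then (1 : ℝ) else 0)) y) i‖ ^ 2
      = if (e.symm i : Sym2 V) ∈ symmDiff (E x) (E y) then (1 : ℝ) else 0 := by
    intro i
    simpa using hterm i
  rw [Finset.sum_congr rfl fun i _ => this i]
  rw [Equiv.sum_comp e.symm (fun s : ↥G.edgeFinset =>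
    if (s : Sym2 V) ∈ symmDiff (E x) (E y) then (1 : ℝ) else 0)]
  rw [Finset.univ_eq_attach, Finset.sum_attach G.edgeFinset (fun s : Sym2 V =>
    if s ∈ symmDiff (E x) (E y) then (1 : ℝ) else 0)]
  rw [Finset.sum_boole]
  have hfilter : G.edgeFinset.filter (· ∈ symmDiff (E x) (E y)) = symmDiff (E x) (E y) := by
    ext s
    simp only [Finset.mem_filter]
    exact ⟨fun h => h.2, fun h => ⟨hsub h, h⟩⟩
  rw [hfilter, hsymm, hdist]
end

section
/- For any real number p with 0 < p < 2, there exists a finite tree T (with its tree metric d) such that for every n, there is no power-p embedding of T into ℝ^n; that is, no map f from the vertices of T to ℝ^n satisfies ‖f(x) − f(y)‖^p = d(x, y) for all vertices x, y. -/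
open Finset RealInnerProductSpace
open SimpleGraph hiding starGraph

/-- Star graph with center `none` and `k` leaves. -/
def starGraph (k : ℕ) : SimpleGraph (Option (Fin k)) where
  Adj x y := (x = none ∨ y = none) ∧ x ≠ y
  symm := Std.Symm.mk <| by
    rintro x y ⟨h | h, hne⟩
    · exact ⟨Or.inr h, hne.symm⟩
    · exact ⟨Or.inl h, hne.symm⟩
  loopless := ⟨fun x h => h.2 rfl⟩

lemma starGraph_adj {k : ℕ} {x y : Option (Fin k)} :
    (starGraph k).Adj x y ↔ (x = none ∨ y = none) ∧ x ≠ y := Iff.rfl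

lemma starGraph_adj_none_some {k : ℕ} (i : Fin k) :
    (starGraph k).Adj none (some i) := ⟨Or.inl rfl, by simp⟩

lemma walk_some_some_none_not_mem {k : ℕ} :
    ∀ {i j : Fin k} (q : (starGraph k).Walk (some i) (some j)),
      none ∉ q.support → i = j := by
  intro i j q hq
  cases q with
  | nil => rfl
  | cons h q' =>
    exfalso
    rcases h.1 with h1 | h1
    · exact (Option.some_ne_none i) h1
    · subst h1
      exact hq (by simp [SimpleGraph.Walk.support_cons])

/-- Any path from the center to a leaf is a single edge. -/
lemma path_none_some {k : ℕ} (i : Fin k) (p : (starGraph k).Walk none (some i))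
    (hp : p.IsPath) : p = SimpleGraph.Walk.cons (starGraph_adj_none_some i) SimpleGraph.Walk.nil := by
  cases p with
  | cons h q =>
    rename_i w
    rw [SimpleGraph.Walk.cons_isPath_iff] at hp
    match w, h with
    | none, h => exact absurd rfl h.2
    | some m, h =>
      have : m = i := walk_some_some_none_not_mem q hp.2
      subst this
      rw [SimpleGraph.Walk.isPath_iff_eq_nil] at hp
      rw [hp.1]

/-- For any real `p` with `0 < p < 2`, there exists a finite tree `T`
(with its tree metric `d`) such that for every `n` there is no power-`p` embedding of `T`
into `ℝ^n`: no map `f` from the vertices of `T` to `EuclideanSpace ℝ (Fin n)` satisfies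
`‖f x - f y‖ ^ p = d(x, y)` for all vertices `x y`. -/
theorem exists_tree_no_power_p_embedding (p : ℝ) (hp0 : 0 < p) (hp2 : p < 2) :
    ∃ (V : Type) (_ : Fintype V) (G : SimpleGraph V), G.IsTree ∧
      ∀ (n : ℕ) (f : V → EuclideanSpace ℝ (Fin n)),
        ¬ (∀ x y : V, ‖f x - f y‖ ^ p = (G.dist x y : ℝ)) := by
  -- the key quantity
  set t : ℝ := (2 : ℝ) ^ (2 / p) with ht_def
  have ht2 : 2 < t := by
    have h1 : (1 : ℝ) < 2 / p := (one_lt_div hp0).mpr hp2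
    calc (2:ℝ) = 2 ^ (1:ℝ) := (Real.rpow_one 2).symm
    _ < t := Real.rpow_lt_rpow_of_exponent_lt one_lt_two h1
  set k : ℕ := ⌈2 / (t - 2)⌉₊ + 2 with hk_def
  refine ⟨Option (Fin k), inferInstance, starGraph k, ?_, ?_⟩
  · -- it's a tree
    rw [SimpleGraph.isTree_iff_existsUnique_path]
    refine ⟨⟨none⟩, ?_⟩
    intro v w
    match v, w with
    | none, none =>
      refine ⟨SimpleGraph.Walk.nil, SimpleGraph.Walk.IsPath.nil, ?_⟩
      intro q hq
      exact (SimpleGraph.Walk.isPath_iff_eq_nil (p := q)).mp hq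
    | none, some i =>
      refine ⟨SimpleGraph.Walk.cons (starGraph_adj_none_some i) SimpleGraph.Walk.nil, ?_, ?_⟩
      · simp [SimpleGraph.Walk.cons_isPath_iff]
      · intro q hq
        exact path_none_some i q hq
    | some i, none =>
      refine ⟨SimpleGraph.Walk.cons ((starGraph_adj_none_some i).symm) SimpleGraph.Walk.nil, ?_, ?_⟩
      · simp [SimpleGraph.Walk.cons_isPath_iff]
      · intro q hq
        have h1 := path_none_some i q.reverse hq.reverse
        have := congrArg SimpleGraph.Walk.reverse h1
        rw [SimpleGraph.Walk.reverse_reverse] at this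
        rw [this]
        simp [SimpleGraph.Walk.reverse_cons]
    | some i, some j =>
      rcases eq_or_ne i j with rfl | hij
      · refine ⟨SimpleGraph.Walk.nil, SimpleGraph.Walk.IsPath.nil, ?_⟩
        intro q hq
        exact (SimpleGraph.Walk.isPath_iff_eq_nil (p := q)).mp hq
      · have hbase : (starGraph k).Walk (some i) (some j) :=
          SimpleGraph.Walk.cons ((starGraph_adj_none_some i).symm)
            (SimpleGraph.Walk.cons (starGraph_adj_none_some j) SimpleGraph.Walk.nil)
        have hshape : ∀ (q : (starGraph k).Walk (some i) (some j)), q.IsPath →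
            q = SimpleGraph.Walk.cons ((starGraph_adj_none_some i).symm)
              (SimpleGraph.Walk.cons (starGraph_adj_none_some j) SimpleGraph.Walk.nil) := by
          intro q hq
          cases q with
          | nil => exact absurd rfl hij
          | cons h q' =>
            rename_i w
            rw [SimpleGraph.Walk.cons_isPath_iff] at hq
            match w, h with
            | some m, h =>
              exfalso
              rcases h.1 with h1 | h1
              · exact Option.some_ne_none i h1
              · exact Option.some_ne_none m h1
            | none, h =>
              rw [path_none_some j q' hq.1]
        refine ⟨SimpleGraph.Walk.cons ((starGraph_adj_none_some i).symm)
          (SimpleGraph.Walk.cons (starGraph_adj_none_some j) SimpleGraph.Walk.nil), ?_, hshape⟩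
        simp [SimpleGraph.Walk.cons_isPath_iff, SimpleGraph.Walk.support_cons, hij,
          starGraph_adj_none_some, (starGraph_adj_none_some i).symm]
  · -- no embedding
    intro n f hf
    -- distances
    have hconn : (starGraph k).Connected := by
      rw [SimpleGraph.connected_iff_exists_forall_reachable]
      exact ⟨none, fun v => match v with
        | none => SimpleGraph.Reachable.refl none
        | some i => (starGraph_adj_none_some i).reachable⟩
    have hdist1 : ∀ i : Fin k, (starGraph k).dist none (some i) = 1 :=
      fun i => SimpleGraph.dist_eq_one_iff_adj.mpr (starGraph_adj_none_some i)
    have hdist2 : ∀ i j : Fin k, i ≠ j → (starGraph k).dist (some i) (some j) = 2 := by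
      intro i j hij
      have hle : (starGraph k).dist (some i) (some j) ≤ 2 := by
        have : ((SimpleGraph.Walk.cons ((starGraph_adj_none_some i).symm)
            (SimpleGraph.Walk.cons (starGraph_adj_none_some j)
              SimpleGraph.Walk.nil) : (starGraph k).Walk (some i) (some j))).length = 2 := by
          simp
        have h := SimpleGraph.dist_le (SimpleGraph.Walk.cons ((starGraph_adj_none_some i).symm)
            (SimpleGraph.Walk.cons (starGraph_adj_none_some j) SimpleGraph.Walk.nil))
        omega
      have hne : (some i : Option (Fin k)) ≠ some j := fun h => hij (by simpa using h)
      have hpos : 0 < (starGraph k).dist (some i) (some j) :=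
        hconn.pos_dist_of_ne hne
      have hnadj : ¬ (starGraph k).Adj (some i) (some j) := by
        rintro ⟨h1 | h1, -⟩
        · exact Option.some_ne_none i h1
        · exact Option.some_ne_none j h1
      have hne1 : (starGraph k).dist (some i) (some j) ≠ 1 := by
        intro h; exact hnadj (SimpleGraph.dist_eq_one_iff_adj.mp h)
      omega
    -- the vectors
    set v : Fin k → EuclideanSpace ℝ (Fin n) := fun i => f (some i) - f none with hv
    have hnorm1 : ∀ i : Fin k, ‖v i‖ = 1 := by
      intro i
      have h := hf (some i) none
      rw [SimpleGraph.dist_comm] at h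
      rw [hdist1 i] at h
      have h0 : ‖f (some i) - f none‖ = (‖f (some i) - f none‖ ^ p) ^ (1 / p) := by
        rw [← Real.rpow_mul (norm_nonneg _), mul_one_div, div_self hp0.ne', Real.rpow_one]
      rw [hv]
      simp only []
      rw [h0, h]
      norm_num
    have hnorm2 : ∀ i j : Fin k, i ≠ j → ‖v i - v j‖ = (2 : ℝ) ^ (1 / p) := by
      intro i j hij
      have h := hf (some i) (some j)
      rw [hdist2 i j hij] at h
      have hvij : v i - v j = f (some i) - f (some j) := by
        rw [hv]; simp only []; abel
      rw [hvij]
      have h0 : ‖f (some i) - f (some j)‖ = (‖f (some i) - f (some j)‖ ^ p) ^ (1 / p) := by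
        rw [← Real.rpow_mul (norm_nonneg _), mul_one_div, div_self hp0.ne', Real.rpow_one]
      rw [h0, h]
      norm_num
    -- inner products
    have hinner_diag : ∀ i : Fin k, ⟪v i, v i⟫ = 1 := by
      intro i
      rw [real_inner_self_eq_norm_sq, hnorm1 i]
      norm_num
    have hinner : ∀ i j : Fin k, i ≠ j → ⟪v i, v j⟫ = (2 - t) / 2 := by
      intro i j hij
      have hsq : ‖v i - v j‖ ^ (2:ℕ) = t := by
        rw [hnorm2 i j hij, ← Real.rpow_natCast ((2:ℝ) ^ (1/p)) 2,
          ← Real.rpow_mul (by norm_num : (0:ℝ) ≤ 2)]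
        norm_num
        rw [ht_def]
        ring_nf
      have h := @norm_sub_sq_real (EuclideanSpace ℝ (Fin n)) _ _ (v i) (v j)
      rw [hnorm1 i, hnorm1 j] at h
      rw [h] at hsq
      linarith
    -- sum of inner products
    have hsum : (0:ℝ) ≤ (k:ℝ) + (k:ℝ) * (((k:ℝ) - 1) * ((2 - t) / 2)) := by
      have h0 : (0:ℝ) ≤ ⟪∑ i, v i, ∑ i, v i⟫ := real_inner_self_nonneg
      have h1 : ⟪∑ i, v i, ∑ i, v i⟫ = ∑ i, ∑ j, ⟪v i, v j⟫ := by
        rw [sum_inner]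
        exact Finset.sum_congr rfl fun i _ => inner_sum _ _ _
      have h2 : ∀ i : Fin k, ∑ j, ⟪v i, v j⟫ = 1 + ((k:ℝ) - 1) * ((2 - t) / 2) := by
        intro i
        have e1 : ∀ j : Fin k, ⟪v i, v j⟫ =
            (2 - t) / 2 + (if i = j then (1:ℝ) - (2 - t) / 2 else 0) := by
          intro j
          by_cases hij : i = j
          · subst hij; simp [hinner_diag i, hnorm1 i]
          · simp [hij, hinner i j hij]
        rw [Finset.sum_congr rfl fun j _ => e1 j, Finset.sum_add_distrib,
          Finset.sum_const, Finset.sum_ite_eq, Finset.card_univ]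
        simp [Fintype.card_fin, nsmul_eq_mul]
        ring
      rw [h1] at h0
      rw [Finset.sum_congr rfl fun i _ => h2 i] at h0
      simpa [Finset.sum_const, Finset.card_univ, nsmul_eq_mul] using h0
    -- contradiction
    have hkreal : (2 / (t - 2) : ℝ) ≤ ((k:ℝ) - 2) := by
      rw [hk_def]
      push_cast
      have := Nat.le_ceil (2 / (t - 2) : ℝ)
      linarith
    have htpos : (0:ℝ) < t - 2 := by linarith
    have hklarge : ((k:ℝ) - 1) * (t - 2) > 2 := by
      have h2 : (2:ℝ) ≤ ((k:ℝ) - 2) * (t - 2) := by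
        rw [div_le_iff₀ htpos] at hkreal
        linarith
      nlinarith
    have hkpos : (0:ℝ) < (k:ℝ) := by positivity
    nlinarith [hsum]
end

section
/- A finite tree T (with its tree metric d) admits an isometric embedding into some Euclidean space ℝ^n if and only if T is a path (a chain), i.e., every vertex of T has degree at most 2. -/
open SimpleGraph Finset RealInnerProductSpace

section Aux

variable {V : Type*} {G : SimpleGraph V}

/-- On any walk, the `i`-th vertex is within distance `i` of the start. -/
lemma aux_dist_getVert_le (hc : G.Connected) :
    ∀ {u y : V} (p : G.Walk u y) (i : ℕ), G.dist u (p.getVert i) ≤ i := by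
  intro u y p
  induction p with
  | nil => intro i; simp [SimpleGraph.Walk.getVert, SimpleGraph.dist_self]
  | @cons a b c h q ih =>
    intro i
    match i with
    | 0 => simp
    | (i + 1) =>
      have h1 : G.dist a b = 1 := SimpleGraph.dist_eq_one_iff_adj.mpr h
      calc G.dist a ((SimpleGraph.Walk.cons h q).getVert (i + 1))
          ≤ G.dist a b + G.dist b (q.getVert i) := hc.dist_triangle
        _ ≤ 1 + i := by
            have := ih i
            omega
        _ = i + 1 := by omega

/-- On any walk, the `i`-th vertex is within distance `length - i` of the end. -/
lemma aux_dist_getVert_le' (hc : G.Connected) {u y : V} (p : G.Walk u y) {i : ℕ}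
    (hi : i ≤ p.length) : G.dist (p.getVert i) y ≤ p.length - i := by
  have h1 : p.reverse.getVert (p.length - i) = p.getVert i := by
    rw [SimpleGraph.Walk.getVert_reverse]
    congr 1
    omega
  have h2 := aux_dist_getVert_le hc p.reverse (p.length - i)
  rw [h1] at h2
  rwa [SimpleGraph.dist_comm]

/-- A vertex at positive distance from `u` has a neighbour one step closer to `u`. -/
lemma aux_exists_closer (hc : G.Connected) {u x : V} {k : ℕ}
    (hx : G.dist u x = k + 1) :
    ∃ w, G.Adj w x ∧ G.dist u w = k := by
  have hne : G.dist x u ≠ 0 := by rw [SimpleGraph.dist_comm]; omega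
  obtain ⟨p, hp⟩ := SimpleGraph.exists_walk_of_dist_ne_zero hne
  rw [SimpleGraph.dist_comm] at hp
  cases p with
  | nil => exact absurd hx (by simp)
  | @cons _ w _ h q =>
    refine ⟨w, h.symm, ?_⟩
    have hlen : q.length = k := by
      have := hp
      simp [SimpleGraph.Walk.length_cons] at this
      omega
    have hle : G.dist u w ≤ k := by
      have := SimpleGraph.dist_le q.reverse
      simpa [hlen] using this
    have hge : k + 1 ≤ G.dist u w + 1 := by
      have htri : G.dist u x ≤ G.dist u w + G.dist w x := hc.dist_triangle
      have hwx : G.dist w x = 1 := SimpleGraph.dist_eq_one_iff_adj.mpr h.symm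
      omega
    omega

end Aux

/-- A finite tree `T` (with its tree metric) admits an isometric embedding
into some Euclidean space `ℝ^n` if and only if `T` is a path (chain), i.e. every vertex has
degree at most 2. -/
theorem tree_isometric_embedding_iff_path {V : Type*} [Fintype V] (G : SimpleGraph V)
    [DecidableRel G.Adj] (hG : G.IsTree) :
    (∃ (n : ℕ) (f : V → EuclideanSpace ℝ (Fin n)),
        ∀ x y : V, ‖f x - f y‖ = (G.dist x y : ℝ)) ↔ ∀ v : V, G.degree v ≤ 2 := by
  have hc : G.Connected := hG.isConnected
  constructor
  · rintro ⟨n, f, hf⟩ v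
    by_contra hdeg
    push_neg at hdeg
    rw [show (2 : ℕ) < G.degree v ↔ 2 < #(G.neighborFinset v) from Iff.rfl,
      Finset.two_lt_card_iff] at hdeg
    obtain ⟨a, b, c, ha, hb, hcc, hab, hac, hbc⟩ := hdeg
    rw [SimpleGraph.mem_neighborFinset] at ha hb hcc
    -- distances between neighbours of `v` equal 2 (no triangles in a tree)
    have hnoadj : ∀ x y : V, G.Adj v x → G.Adj v y → x ≠ y → ¬ G.Adj x y := by
      intro x y hx hy hxy hadj
      obtain ⟨p, -, hup⟩ := hG.existsUnique_path x y
      have h1 := hup (SimpleGraph.Walk.cons hadj SimpleGraph.Walk.nil)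
        (by simp [SimpleGraph.Walk.cons_isPath_iff, hadj.ne])
      have h2 := hup
        (SimpleGraph.Walk.cons hx.symm (SimpleGraph.Walk.cons hy SimpleGraph.Walk.nil))
        (by simp [SimpleGraph.Walk.cons_isPath_iff, hxy, hx.ne', hy.ne])
      have heq := h1.trans h2.symm
      have := congrArg SimpleGraph.Walk.length heq
      simp at this
    have hdist2 : ∀ x y : V, G.Adj v x → G.Adj v y → x ≠ y → G.dist x y = 2 := by
      intro x y hx hy hxy
      have hle : G.dist x y ≤ 2 := by
        have := hc.dist_triangle (u := x) (v := v) (w := y)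
        have h1 : G.dist x v = 1 := SimpleGraph.dist_eq_one_iff_adj.mpr hx.symm
        have h2 : G.dist v y = 1 := SimpleGraph.dist_eq_one_iff_adj.mpr hy
        omega
      have hne0 : G.dist x y ≠ 0 := fun h0 => hxy (hc.dist_eq_zero_iff.mp h0)
      have hne1 : G.dist x y ≠ 1 := by
        rw [ne_eq, SimpleGraph.dist_eq_one_iff_adj]
        exact hnoadj x y hx hy hxy
      omega
    -- Euclidean geometry: midpoint rigidity
    have mid : ∀ x y : V, G.Adj v x → G.Adj v y → x ≠ y →
        f x - f v = f v - f y := by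
      intro x y hx hy hxy
      have h1 : ‖f x - f v‖ = 1 := by
        rw [hf, SimpleGraph.dist_eq_one_iff_adj.mpr hx.symm]; norm_num
      have h2 : ‖f v - f y‖ = 1 := by
        rw [hf, SimpleGraph.dist_eq_one_iff_adj.mpr hy]; norm_num
      have h3 : ‖(f x - f v) + (f v - f y)‖ = 2 := by
        have : (f x - f v) + (f v - f y) = f x - f y := by abel
        rw [this, hf, hdist2 x y hx hy hxy]; norm_num
      have hinner : (inner ℝ (f x - f v) (f v - f y) : ℝ) = ‖f x - f v‖ * ‖f v - f y‖ := by
        have := norm_add_sq_real (f x - f v) (f v - f y)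
        rw [h1, h2, h3] at this
        rw [h1, h2]
        nlinarith [this]
      have := inner_eq_norm_mul_iff_real.mp hinner
      rw [h1, h2] at this
      simpa using this
    have e1 : f a - f v = f v - f b := mid a b ha hb hab
    have e2 : f a - f v = f v - f c := mid a c ha hcc hac
    have : f b = f c := sub_right_inj.mp (e1.symm.trans e2)
    have : ‖f b - f c‖ = 0 := by rw [this]; simp
    rw [hf, hdist2 b c hb hcc hbc] at this
    norm_num at this
  · intro hdeg
    -- find an endpoint: a vertex of degree ≤ 1
    obtain ⟨u, hu⟩ : ∃ u : V, G.degree u ≤ 1 := by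
      by_contra h
      push_neg at h
      have hsum : ∑ v : V, G.degree v = 2 * #G.edgeFinset :=
        SimpleGraph.sum_degrees_eq_twice_card_edges G
      have hcard : #G.edgeFinset + 1 = Fintype.card V := hG.card_edgeFinset
      have h2 : 2 * Fintype.card V ≤ ∑ v : V, G.degree v := by
        calc 2 * Fintype.card V = ∑ _v : V, 2 := by
              rw [Finset.sum_const, Finset.card_univ, smul_eq_mul, mul_comm]
          _ ≤ ∑ v : V, G.degree v := Finset.sum_le_sum fun v _ => h v
      omega
    -- uniqueness of vertices at a given distance from the endpoint `u`
    have uniq : ∀ k : ℕ, ∀ x y : V, G.dist u x = k → G.dist u y = k → x = y := by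
      intro k
      induction k using Nat.strong_induction_on with
      | _ k ih =>
        intro x y hx hy
        match k with
        | 0 =>
          have hxu : x = u := (hc.dist_eq_zero_iff.mp hx).symm
          have hyu : y = u := (hc.dist_eq_zero_iff.mp hy).symm
          rw [hxu, hyu]
        | 1 =>
          by_contra hxy
          have hax : G.Adj u x := SimpleGraph.dist_eq_one_iff_adj.mp hx
          have hay : G.Adj u y := SimpleGraph.dist_eq_one_iff_adj.mp hy
          have : 1 < #(G.neighborFinset u) := Finset.one_lt_card.mpr
            ⟨x, by simpa using hax, y, by simpa using hay, hxy⟩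
          have : 1 < G.degree u := this
          omega
        | (k + 2) =>
          by_contra hxy
          obtain ⟨x', hx'adj, hx'⟩ := aux_exists_closer hc hx
          obtain ⟨y', hy'adj, hy'⟩ := aux_exists_closer hc hy
          have hxy' : x' = y' := ih (k + 1) (by omega) x' y' hx' hy'
          subst hxy'
          obtain ⟨z, hzadj, hz⟩ := aux_exists_closer hc hx'
          have hzx : z ≠ x := by
            intro h; rw [h] at hz; omega
          have hzy : z ≠ y := by
            intro h; rw [h] at hz; omega
          have : 2 < #(G.neighborFinset x') := Finset.two_lt_card_iff.mpr
            ⟨x, y, z, by simpa using hx'adj, by simpa using hy'adj,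
              by simpa using hzadj.symm, hxy, hzx ∘ Eq.symm, hzy ∘ Eq.symm⟩
          have : 2 < G.degree x' := this
          have := hdeg x'
          omega
    -- the key additivity along the path from `u`
    have addi : ∀ x y : V, G.dist u x ≤ G.dist u y →
        G.dist u x + G.dist x y = G.dist u y := by
      intro x y hxy
      rcases Nat.eq_zero_or_pos (G.dist u y) with hb0 | hbpos
      · have hxu : x = u := (hc.dist_eq_zero_iff.mp (by omega)).symm
        have hyu : y = u := (hc.dist_eq_zero_iff.mp hb0).symm
        rw [hxu, hyu]
        simp [SimpleGraph.dist_self]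
      · obtain ⟨p, hp⟩ := SimpleGraph.exists_walk_of_dist_ne_zero
          (show G.dist u y ≠ 0 by omega)
        have h1 : G.dist u (p.getVert (G.dist u x)) ≤ G.dist u x :=
          aux_dist_getVert_le hc p _
        have h2 : G.dist (p.getVert (G.dist u x)) y ≤ G.dist u y - G.dist u x := by
          have := aux_dist_getVert_le' hc p (i := G.dist u x) (by omega)
          omega
        have h3 : G.dist u y ≤ G.dist u (p.getVert (G.dist u x)) +
            G.dist (p.getVert (G.dist u x)) y := hc.dist_triangle
        have h4 : G.dist u (p.getVert (G.dist u x)) = G.dist u x := by omega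
        have hwx := uniq (G.dist u x) _ x h4 rfl
        rw [hwx] at h2
        have h6 : G.dist u y ≤ G.dist u x + G.dist x y := hc.dist_triangle
        omega
    -- define the embedding into ℝ¹
    refine ⟨1, fun v => (G.dist u v : ℝ) • EuclideanSpace.single (0 : Fin 1) (1 : ℝ),
      fun x y => ?_⟩
    have hcomb : (G.dist u x : ℝ) • EuclideanSpace.single (0 : Fin 1) (1 : ℝ) -
        (G.dist u y : ℝ) • EuclideanSpace.single (0 : Fin 1) (1 : ℝ) =
        ((G.dist u x : ℝ) - (G.dist u y : ℝ)) • EuclideanSpace.single (0 : Fin 1) (1 : ℝ) := by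
      module
    rw [hcomb, norm_smul, EuclideanSpace.norm_single]
    simp only [norm_one, mul_one, Real.norm_eq_abs]
    rcases le_total (G.dist u x) (G.dist u y) with h | h
    · have hn := addi x y h
      rw [abs_sub_comm, abs_of_nonneg
        (by have := Nat.cast_le (α := ℝ) |>.mpr h; linarith :
          (0:ℝ) ≤ (G.dist u y : ℝ) - G.dist u x)]
      have hcast : (G.dist u x : ℝ) + G.dist x y = G.dist u y := by exact_mod_cast hn
      linarith
    · have hn := addi y x h
      rw [abs_of_nonneg
        (by have := Nat.cast_le (α := ℝ) |>.mpr h; linarith :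
          (0:ℝ) ≤ (G.dist u x : ℝ) - G.dist u y)]
      have hcast : (G.dist u y : ℝ) + G.dist y x = G.dist u x := by exact_mod_cast hn
      have hco : G.dist x y = G.dist y x := SimpleGraph.dist_comm
      rw [hco]
      linarith
end

section
/- For any real number p > 2 and any finite tree T with n vertices and tree metric d, there exists N and a power-p embedding of T into ℝ^N, i.e., a map f from the vertices of T to ℝ^N with ‖f(x) − f(y)‖^p = d(x, y) for all vertices x, y. -/
open SimpleGraph

section TreeEmbedHelpers

variable {V : Type*} {G : SimpleGraph V}

/-- In a tree, every path between two vertices has length equal to the graph distance. -/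
lemma tree_path_length_eq_dist (hG : G.IsTree) {x y : V} (p : G.Walk x y) (hp : p.IsPath) :
    p.length = G.dist x y := by
  obtain ⟨q, hq, hql⟩ := hG.isConnected.exists_path_of_dist x y
  have := (hG.existsUnique_path x y).unique hp hq
  rw [this, hql]

/-- A path concatenated with an edge to a fresh vertex is a path. -/
lemma isPath_concat {x w v : V} {q : G.Walk x w} (hq : q.IsPath) (h : G.Adj w v)
    (hv : v ∉ q.support) : (q.concat h).IsPath := by
  rw [Walk.isPath_def, Walk.support_concat, List.nodup_append]
  exact ⟨hq.support_nodup, List.nodup_singleton v, by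
    rintro a ha b hav rfl
    simp only [List.mem_singleton] at hav
    exact hv (hav ▸ ha)⟩

/-- Every vertex `v ≠ r` in a tree has a "parent" towards `r`. -/
lemma tree_exists_parent (hG : G.IsTree) {r v : V} (h : v ≠ r) :
    ∃ u, G.Adj u v ∧ G.dist r u + 1 = G.dist r v := by
  obtain ⟨p, hp, hpl⟩ := hG.isConnected.exists_path_of_dist r v
  cases p with
  | nil => exact absurd rfl h.symm
  | cons ha t =>
    obtain ⟨u, q, hadj, hcq⟩ := Walk.exists_cons_eq_concat ha t
    refine ⟨u, hadj, ?_⟩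
    have hq : q.IsPath := by
      have : (q.concat hadj).IsPath := hcq ▸ hp
      rw [Walk.concat_eq_append] at this
      exact this.of_append_left
    have hlen : q.length = G.dist r u := tree_path_length_eq_dist hG q hq
    have : (Walk.cons ha t).length = q.length + 1 := by rw [hcq, Walk.length_concat]
    omega

/-- KEY: if `u` is the parent of `v` (towards `r`) and `x` is no farther from `r` than `v`,
`x ≠ v`, then the distance from `v` to `x` goes through `u`. -/
lemma tree_key (hG : G.IsTree) {r u v : V} (huv : G.Adj u v) (hu : G.dist r u + 1 = G.dist r v)
    {x : V} (hx : G.dist r x ≤ G.dist r v) (hxv : x ≠ v) :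
    G.dist v x = G.dist u x + 1 := by
  classical
  have hconn := hG.isConnected
  obtain ⟨p, hp, hpl⟩ := hconn.exists_path_of_dist x v
  cases p with
  | nil => exact absurd rfl hxv
  | cons ha t =>
    obtain ⟨w, q, hwv, hcq⟩ := Walk.exists_cons_eq_concat ha t
    have hcqp : (q.concat hwv).IsPath := hcq ▸ hp
    have hq : q.IsPath := by
      rw [Walk.concat_eq_append] at hcqp
      exact hcqp.of_append_left
    have hvq : v ∉ q.support := by
      have h2 := hcq ▸ hp
      rw [Walk.isPath_def, Walk.support_concat,
        List.nodup_append] at h2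
      intro hmem
      exact h2.2.2 v hmem v (List.mem_singleton_self v) rfl
    obtain ⟨s, hs, hsl⟩ := hconn.exists_path_of_dist r x
    by_cases hvs : v ∈ s.support
    · exfalso
      have h1 : (s.takeUntil v hvs).length = G.dist r v :=
        tree_path_length_eq_dist hG _ (hs.takeUntil hvs)
      have h2 : (s.dropUntil v hvs).length = G.dist v x :=
        tree_path_length_eq_dist hG _ (hs.dropUntil hvs)
      have h3 : (s.takeUntil v hvs).length + (s.dropUntil v hvs).length = s.length := by
        rw [← Walk.length_append, Walk.take_spec]
      have h4 : 0 < G.dist v x := hconn.pos_dist_of_ne (Ne.symm hxv)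
      omega
    · obtain ⟨pr, hpr, hprl⟩ := hconn.exists_path_of_dist r u
      have hvpr : v ∉ pr.support := by
        intro hmem
        have h5 := tree_path_length_eq_dist hG _ (hpr.takeUntil hmem)
        have hle := Walk.length_takeUntil_le pr hmem
        omega
      have hB : (pr.concat huv).IsPath := isPath_concat hpr huv hvpr
      have hvD : v ∉ (s.append q).bypass.support := fun hmem => by
        have h6 := (s.append q).support_bypass_subset hmem
        rw [Walk.mem_support_append_iff] at h6
        exact h6.elim hvs hvq
      have hD := (s.append q).bypass_isPath
      have hE : ((s.append q).bypass.concat hwv).IsPath := isPath_concat hD hwv hvD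
      have heq := (hG.existsUnique_path r v).unique hB hE
      obtain ⟨hveq, -⟩ := Walk.concat_inj heq
      subst hveq
      have hql : q.length = G.dist x u := tree_path_length_eq_dist hG q hq
      have hlc : (Walk.cons ha t).length = q.length + 1 := by rw [hcq, Walk.length_concat]
      have h4 : 0 < G.dist x v := hconn.pos_dist_of_ne hxv
      rw [SimpleGraph.dist_comm (u := v) (v := x), SimpleGraph.dist_comm (u := u) (v := x)]
      omega

open SimpleGraph Finset

variable [Fintype V] [DecidableEq V]

/-- Double-sum bilinear form associated to a kernel. -/
def bform (K : V → V → ℝ) (f g : V → ℝ) : ℝ := ∑ x, ∑ y, f x * g y * K x y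

/-- Indicator-type function. -/
def sngl (a : V) (c : ℝ) : V → ℝ := fun z => if z = a then c else 0

lemma bform_add_left (K : V → V → ℝ) (f g h : V → ℝ) :
    bform K (fun z => f z + g z) h = bform K f h + bform K g h := by
  simp only [bform, add_mul, Finset.sum_add_distrib]

lemma bform_add_right (K : V → V → ℝ) (f g h : V → ℝ) :
    bform K f (fun z => g z + h z) = bform K f g + bform K f h := by
  simp only [bform, mul_add, add_mul, Finset.sum_add_distrib]

lemma bform_comm (K : V → V → ℝ) (hsymm : ∀ x y, K x y = K y x) (f g : V → ℝ) :
    bform K f g = bform K g f := by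
  rw [bform, Finset.sum_comm]
  refine Finset.sum_congr rfl fun x _ => Finset.sum_congr rfl fun y _ => ?_
  rw [hsymm y x]; ring

lemma bform_sngl_right (K : V → V → ℝ) (f : V → ℝ) (a : V) (c : ℝ) :
    bform K f (sngl a c) = c * ∑ x, f x * K x a := by
  rw [bform, Finset.mul_sum]
  refine Finset.sum_congr rfl fun x _ => ?_
  simp only [sngl, mul_ite, mul_zero, ite_mul, zero_mul, Finset.sum_ite_eq',
    Finset.mem_univ, if_true]
  ring

lemma bform_sngl_sngl (K : V → V → ℝ) (a b : V) (c e : ℝ) :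
    bform K (sngl a c) (sngl b e) = c * e * K a b := by
  rw [bform_sngl_right]
  simp only [sngl, ite_mul, zero_mul, Finset.sum_ite_eq', Finset.mem_univ, if_true]
  ring

/-- Quadratic form expansion for a symmetric kernel. -/
lemma bform_quad (K : V → V → ℝ) (hsymm : ∀ x y, K x y = K y x) (f g : V → ℝ) :
    bform K (fun z => f z + g z) (fun z => f z + g z)
      = bform K f f + 2 * bform K f g + bform K g g := by
  rw [bform_add_left, bform_add_right, bform_add_right, bform_comm K hsymm g f]
  ring

lemma quad_base {G : SimpleGraph V} (hconn : G.Connected) {q : ℝ} (r : V) (s : Finset V)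
    (hzero : ∀ x ∈ s, G.dist r x = 0) (η : V → ℝ) (hsupp : ∀ x ∉ s, η x = 0) :
    0 ≤ bform (fun x y => q ^ G.dist x y) η η := by
  have hη : ∀ x, x ≠ r → η x = 0 := by
    intro x hxr
    by_cases hxs : x ∈ s
    · exact absurd (hconn.dist_eq_zero_iff.mp (hzero x hxs)).symm hxr
    · exact hsupp x hxs
  have h1 : bform (fun x y => q ^ G.dist x y) η η = η r * η r := by
    rw [bform, Finset.sum_eq_single r]
    · rw [Finset.sum_eq_single r]
      · simp [SimpleGraph.dist_self]
      · intro b _ hbr; simp [hη b hbr]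
      · intro h; exact absurd (Finset.mem_univ r) h
    · intro b _ hbr; apply Finset.sum_eq_zero; intro y _; simp [hη b hbr]
    · intro h; exact absurd (Finset.mem_univ r) h
  rw [h1]; exact mul_self_nonneg _

lemma kernel_quad_nonneg {G : SimpleGraph V} (hG : G.IsTree) {q : ℝ}
    (hq0 : 0 ≤ q) (hq1 : q ≤ 1) (η : V → ℝ) :
    0 ≤ bform (fun x y => q ^ G.dist x y) η η := by
  set K : V → V → ℝ := fun x y => q ^ G.dist x y with hK
  have hsymm : ∀ x y, K x y = K y x := fun x y => by
    simp only [hK]; rw [SimpleGraph.dist_comm]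
  obtain ⟨r⟩ : Nonempty V := hG.isConnected.nonempty
  suffices H : ∀ n (s : Finset V), (∑ x ∈ s, G.dist r x) ≤ n →
      ∀ η : V → ℝ, (∀ x ∉ s, η x = 0) → 0 ≤ bform K η η by
    exact H (∑ x : V, G.dist r x) Finset.univ le_rfl η
      (fun x hx => absurd (Finset.mem_univ x) hx)
  intro n
  induction n with
  | zero =>
    intro s hs η hsupp
    refine quad_base hG.isConnected r s (fun x hx => ?_) η hsupp
    have h0 := Nat.le_zero.mp hs
    exact (Finset.sum_eq_zero_iff.mp h0) x hx
  | succ n ih =>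
    intro s hs η hsupp
    by_cases hall : ∀ x ∈ s, G.dist r x = 0
    · exact quad_base hG.isConnected r s hall η hsupp
    push_neg at hall
    obtain ⟨x0, hx0s, hx0⟩ := hall
    obtain ⟨v, hvs, hvmax⟩ := Finset.exists_max_image s (fun z => G.dist r z) ⟨x0, hx0s⟩
    have hvpos : 0 < G.dist r v := lt_of_lt_of_le (Nat.pos_of_ne_zero hx0) (hvmax x0 hx0s)
    have hvr : v ≠ r := by rintro rfl; simp [SimpleGraph.dist_self] at hvpos
    obtain ⟨u, huv, hupar⟩ := tree_exists_parent hG hvr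
    have huvne : u ≠ v := G.ne_of_adj huv
    set ηt : V → ℝ := fun z => if z = v then 0 else η z with hηt
    have hdec1 : η = fun z => ηt z + sngl v (η v) z := by
      funext z
      by_cases hz : z = v <;> simp [hηt, sngl, hz]
    set η' : V → ℝ := fun z => ηt z + sngl u (q * η v) z with hη'
    have hkey : ∀ z, ηt z ≠ 0 → q ^ G.dist z v = q * q ^ G.dist z u := by
      intro z hz
      have hzv : z ≠ v := by intro h; simp [hηt, h] at hz
      have hzs : z ∈ s := by
        by_contra hc
        simp [hηt, hzv, hsupp z hc] at hz
      have hd0 := tree_key hG huv hupar (hvmax z hzs) hzv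
      have hd : G.dist z v = G.dist z u + 1 := by
        rw [SimpleGraph.dist_comm (u := z) (v := v), SimpleGraph.dist_comm (u := z) (v := u)]
        exact hd0
      rw [hd, pow_succ]
      ring
    have hTv : (∑ z, ηt z * q ^ G.dist z v) = q * ∑ z, ηt z * q ^ G.dist z u := by
      rw [Finset.mul_sum]
      refine Finset.sum_congr rfl fun z _ => ?_
      by_cases hz : ηt z = 0
      · simp [hz]
      · rw [hkey z hz]; ring
    have hsv : ηt v + sngl v (η v) v = η v := by simp [hηt, sngl]
    have hQη : bform K η η
        = bform K ηt ηt + 2 * (η v) * (∑ z, ηt z * q ^ G.dist z v) + (η v)^2 := by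
      conv_lhs => rw [hdec1]
      rw [bform_quad K hsymm, bform_sngl_right, bform_sngl_sngl]
      simp only [hK, SimpleGraph.dist_self, pow_zero]
      ring
    have hQη' : bform K η' η'
        = bform K ηt ηt + 2 * (q * η v) * (∑ z, ηt z * q ^ G.dist z u) + (q * η v)^2 := by
      conv_lhs => rw [hη']
      rw [bform_quad K hsymm, bform_sngl_right, bform_sngl_sngl]
      simp only [hK, SimpleGraph.dist_self, pow_zero]
      ring
    have hsupp' : ∀ z, z ∉ insert u (s.erase v) → η' z = 0 := by
      intro z hz
      rw [Finset.mem_insert, Finset.mem_erase] at hz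
      push_neg at hz
      obtain ⟨hzu, hz2⟩ := hz
      by_cases hzv : z = v
      · simp [hη', hηt, sngl, hzv, huvne.symm]
      · have hzs : z ∉ s := fun hmem => hz2 hzv hmem
        simp [hη', hηt, sngl, hzv, hzu, hsupp z hzs]
    have hmeas : ∑ x ∈ insert u (s.erase v), G.dist r x ≤ n := by
      have h1 : ∑ x ∈ insert u (s.erase v), G.dist r x
          ≤ G.dist r u + ∑ x ∈ s.erase v, G.dist r x := by
        by_cases hu : u ∈ s.erase v
        · rw [Finset.insert_eq_self.mpr hu]; exact Nat.le_add_left _ _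
        · rw [Finset.sum_insert hu]
      have h2 : G.dist r v + ∑ x ∈ s.erase v, G.dist r x = ∑ x ∈ s, G.dist r x :=
        Finset.add_sum_erase s _ hvs
      omega
    have hIH := ih (insert u (s.erase v)) hmeas η' hsupp'
    have hq2 : q ^ 2 ≤ 1 := pow_le_one₀ hq0 hq1
    have hdecomp : bform K η η = bform K η' η' + (1 - q^2) * (η v)^2 := by
      rw [hQη, hQη', hTv]; ring
    rw [hdecomp]
    have hnn : 0 ≤ (1 - q^2) * (η v)^2 := mul_nonneg (by linarith) (sq_nonneg _)
    linarith

open MeasureTheory Set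
open scoped ENNReal

lemma snow_integrable {β : ℝ} (hβ0 : 0 < β) (hβ1 : β < 1) {c : ℝ} (hc : 0 ≤ c) :
    IntegrableOn (fun t => (1 - Real.exp (-(c * t))) * t ^ (-β - 1)) (Ioi (0:ℝ)) := by
  rcases eq_or_lt_of_le hc with hc0 | hc0
  · have : EqOn (fun t : ℝ => (1 - Real.exp (-(c * t))) * t ^ (-β - 1)) (fun _ => (0:ℝ))
        (Ioi 0) := by
      intro t _
      simp [← hc0]
    exact (integrableOn_congr_fun this measurableSet_Ioi).mpr ((integrableOn_const_iff (by simp)).mpr (Or.inl enorm_zero))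
  have hmeas : ∀ s : Set ℝ, s ⊆ Ioi 0 → MeasurableSet s →
      AEStronglyMeasurable (fun t : ℝ => (1 - Real.exp (-(c * t))) * t ^ (-β - 1))
        (volume.restrict s) := by
    intro s hs hsm
    have hcont : ContinuousOn (fun t : ℝ => (1 - Real.exp (-(c * t))) * t ^ (-β - 1)) s := by
      apply ContinuousOn.mul
      · fun_prop
      · apply ContinuousOn.rpow_const continuousOn_id
        intro t ht
        exact Or.inl (ne_of_gt (hs ht))
    exact hcont.aestronglyMeasurable hsm
  have h1 : IntegrableOn (fun t => (1 - Real.exp (-(c * t))) * t ^ (-β - 1)) (Ioc (0:ℝ) 1) := by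
    have hg : IntegrableOn (fun t : ℝ => c * t ^ (-β)) (Ioc (0:ℝ) 1) := by
      apply Integrable.const_mul
      have := intervalIntegral.intervalIntegrable_rpow' (a := 0) (b := 1) (r := -β)
        (by linarith)
      rwa [intervalIntegrable_iff_integrableOn_Ioc_of_le zero_le_one] at this
    apply hg.mono' (hmeas _ Ioc_subset_Ioi_self measurableSet_Ioc)
    rw [ae_restrict_iff' measurableSet_Ioc]
    refine ae_of_all _ fun t ht => ?_
    obtain ⟨ht0, ht1⟩ := ht
    have hrp : (0:ℝ) < t ^ (-β - 1) := Real.rpow_pos_of_pos ht0 _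
    have hexp0 : Real.exp (-(c * t)) ≤ 1 := by
      apply Real.exp_le_one_iff.mpr
      nlinarith
    have hexp1 : 1 - Real.exp (-(c * t)) ≤ c * t := by
      nlinarith [Real.add_one_le_exp (-(c * t))]
    have hnn : 0 ≤ 1 - Real.exp (-(c * t)) := by linarith
    rw [Real.norm_eq_abs, abs_of_nonneg (by positivity)]
    calc (1 - Real.exp (-(c * t))) * t ^ (-β - 1) ≤ (c * t) * t ^ (-β - 1) := by
          apply mul_le_mul_of_nonneg_right hexp1 hrp.le
      _ = c * t ^ (-β) := by
          rw [mul_assoc]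
          congr 1
          nth_rewrite 1 [← Real.rpow_one t]
          rw [← Real.rpow_add ht0]
          norm_num
  have h2 : IntegrableOn (fun t => (1 - Real.exp (-(c * t))) * t ^ (-β - 1)) (Ioi (1:ℝ)) := by
    have hg : IntegrableOn (fun t : ℝ => t ^ (-β - 1)) (Ioi (1:ℝ)) :=
      integrableOn_Ioi_rpow_of_lt (by linarith) zero_lt_one
    apply hg.mono' (hmeas _ (fun t ht => mem_Ioi.mpr (lt_trans zero_lt_one (mem_Ioi.mp ht))) measurableSet_Ioi)
    rw [ae_restrict_iff' measurableSet_Ioi]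
    refine ae_of_all _ fun t ht => ?_
    have ht0 : (0:ℝ) < t := lt_trans zero_lt_one ht
    have hrp : (0:ℝ) < t ^ (-β - 1) := Real.rpow_pos_of_pos ht0 _
    have hexp0 : Real.exp (-(c * t)) ≤ 1 := Real.exp_le_one_iff.mpr (by nlinarith)
    have hexp2 : 0 < Real.exp (-(c * t)) := Real.exp_pos _
    rw [Real.norm_eq_abs, abs_of_nonneg (by nlinarith)]
    nlinarith
  have := h1.union h2
  rwa [Ioc_union_Ioi_eq_Ioi zero_le_one] at this

lemma snow_integral {β : ℝ} (hβ0 : 0 < β) (hβ1 : β < 1) {c : ℝ} (hc : 0 < c) :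
    ∫ t in Ioi (0:ℝ), (1 - Real.exp (-(c * t))) * t ^ (-β - 1)
      = c ^ β * ∫ t in Ioi (0:ℝ), (1 - Real.exp (-t)) * t ^ (-β - 1) := by
  have h1 : EqOn (fun t : ℝ => (1 - Real.exp (-(c * t))) * t ^ (-β - 1))
      (fun t : ℝ => c ^ (β + 1) * ((1 - Real.exp (-(c * t))) * (c * t) ^ (-β - 1)))
      (Ioi 0) := by
    intro t ht
    have htp : (0:ℝ) < t := ht
    simp only
    rw [Real.mul_rpow hc.le htp.le]
    rw [show c ^ (β+1) * ((1 - Real.exp (-(c * t))) * (c ^ (-β-1) * t ^ (-β-1)))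
        = (c ^ (β+1) * c ^ (-β-1)) * ((1 - Real.exp (-(c * t))) * t ^ (-β-1)) by ring]
    rw [← Real.rpow_add hc]
    norm_num
  rw [setIntegral_congr_fun measurableSet_Ioi h1, MeasureTheory.integral_const_mul]
  have h2 : (∫ t in Ioi (0:ℝ), (1 - Real.exp (-(c * t))) * (c * t) ^ (-β - 1))
      = c⁻¹ • ∫ t in Ioi (c * 0), (1 - Real.exp (-t)) * t ^ (-β - 1) := by
    rw [← integral_comp_mul_left_Ioi (fun y : ℝ => (1 - Real.exp (-y)) * y ^ (-β - 1)) 0 hc]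
  rw [h2]
  rw [mul_zero, smul_eq_mul, ← mul_assoc]
  congr 1
  rw [show c⁻¹ = c ^ (-1 : ℝ) by rw [Real.rpow_neg_one], ← Real.rpow_add hc]
  ring_nf

lemma snow_C_pos {β : ℝ} (hβ0 : 0 < β) (hβ1 : β < 1) :
    0 < ∫ t in Ioi (0:ℝ), (1 - Real.exp (-t)) * t ^ (-β - 1) := by
  have hinteg : IntegrableOn (fun t : ℝ => (1 - Real.exp (-t)) * t ^ (-β - 1)) (Ioi 0) := by
    have := snow_integrable hβ0 hβ1 (zero_le_one)
    apply this.congr_fun _ measurableSet_Ioi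
    intro t _
    norm_num
  have hnn : 0 ≤ᵐ[volume.restrict (Ioi (0:ℝ))]
      fun t : ℝ => (1 - Real.exp (-t)) * t ^ (-β - 1) := by
    filter_upwards [ae_restrict_mem measurableSet_Ioi] with t ht
    have ht0 : (0:ℝ) < t := ht
    have h1 : Real.exp (-t) ≤ 1 := Real.exp_le_one_iff.mpr (by linarith)
    have h2 := Real.rpow_pos_of_pos ht0 (-β - 1)
    simp only [Pi.zero_apply]
    exact mul_nonneg (by linarith) h2.le
  rw [setIntegral_pos_iff_support_of_nonneg_ae hnn hinteg]
  have hsub : Ioi (0:ℝ) ⊆ Function.support (fun t : ℝ => (1 - Real.exp (-t)) * t ^ (-β - 1)) ∩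
      Ioi 0 := by
    intro t ht
    have ht0 : (0:ℝ) < t := ht
    have h1 : Real.exp (-t) < 1 := Real.exp_lt_one_iff.mpr (by linarith)
    have h2 := Real.rpow_pos_of_pos ht0 (-β - 1)
    have h3 : 0 < (1 - Real.exp (-t)) * t ^ (-β - 1) := by nlinarith
    exact ⟨h3.ne', ht⟩
  calc (0:ℝ≥0∞) < volume (Ioi (0:ℝ)) := by simp [Real.volume_Ioi]
    _ ≤ _ := measure_mono hsub

lemma tree_negtype {G : SimpleGraph V} (hG : G.IsTree)
    {β : ℝ} (hβ0 : 0 < β) (hβ1 : β < 1) (η : V → ℝ) (hsum : ∑ x, η x = 0) :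
    bform (fun x y => (G.dist x y : ℝ) ^ β) η η ≤ 0 := by
  set C := ∫ t in Ioi (0:ℝ), (1 - Real.exp (-t)) * t ^ (-β - 1) with hCdef
  have hCpos : 0 < C := snow_C_pos hβ0 hβ1
  have hrep : ∀ k : ℕ, (k:ℝ) ^ β * C
      = ∫ t in Ioi (0:ℝ), (1 - Real.exp (-((k:ℝ) * t))) * t ^ (-β - 1) := by
    intro k
    rcases Nat.eq_zero_or_pos k with hk | hk
    · subst hk
      simp [Real.zero_rpow hβ0.ne']
    · rw [snow_integral hβ0 hβ1 (by exact_mod_cast hk)]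
  -- flatten to a sum over pairs
  have h1 : bform (fun x y => (G.dist x y : ℝ) ^ β) η η * C
      = ∑ z ∈ (Finset.univ ×ˢ Finset.univ : Finset (V × V)),
          ∫ t in Ioi (0:ℝ), η z.1 * η z.2 *
            ((1 - Real.exp (-((G.dist z.1 z.2 : ℝ) * t))) * t ^ (-β - 1)) := by
    rw [bform, Finset.sum_mul, Finset.sum_product]
    refine Finset.sum_congr rfl fun x _ => ?_
    rw [Finset.sum_mul]
    refine Finset.sum_congr rfl fun y _ => ?_
    rw [MeasureTheory.integral_const_mul, ← hrep (G.dist x y)]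
    ring
  have hintg : ∀ z : V × V, Integrable (fun t => η z.1 * η z.2 *
      ((1 - Real.exp (-((G.dist z.1 z.2 : ℝ) * t))) * t ^ (-β - 1)))
      (volume.restrict (Ioi (0:ℝ))) := by
    intro z
    exact (snow_integrable hβ0 hβ1 (Nat.cast_nonneg _)).const_mul _
  have h2 : bform (fun x y => (G.dist x y : ℝ) ^ β) η η * C
      = ∫ t in Ioi (0:ℝ), ∑ z ∈ (Finset.univ ×ˢ Finset.univ : Finset (V × V)),
          η z.1 * η z.2 *
            ((1 - Real.exp (-((G.dist z.1 z.2 : ℝ) * t))) * t ^ (-β - 1)) := by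
    rw [h1, ← MeasureTheory.integral_finset_sum _ (fun z _ => hintg z)]
  have h3 : ∀ t, t ∈ Ioi (0:ℝ) → (∑ z ∈ (Finset.univ ×ˢ Finset.univ : Finset (V × V)),
      η z.1 * η z.2 *
        ((1 - Real.exp (-((G.dist z.1 z.2 : ℝ) * t))) * t ^ (-β - 1))) ≤ 0 := by
    intro t ht
    have ht0 : (0:ℝ) < t := ht
    have hq0 : (0:ℝ) ≤ Real.exp (-t) := (Real.exp_pos _).le
    have hq1 : Real.exp (-t) ≤ 1 := Real.exp_le_one_iff.mpr (by linarith)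
    have hker := kernel_quad_nonneg hG hq0 hq1 η
    have hexp : ∀ k : ℕ, Real.exp (-((k:ℝ) * t)) = Real.exp (-t) ^ k := by
      intro k
      rw [← Real.exp_nat_mul]
      congr 1
      ring
    have hsplit : (∑ z ∈ (Finset.univ ×ˢ Finset.univ : Finset (V × V)),
        η z.1 * η z.2 * ((1 - Real.exp (-((G.dist z.1 z.2 : ℝ) * t))) * t ^ (-β - 1)))
        = t ^ (-β - 1) * ((∑ x, η x) * (∑ y, η y))
          - t ^ (-β - 1) * bform (fun x y => Real.exp (-t) ^ G.dist x y) η η := by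
      calc (∑ z ∈ (Finset.univ ×ˢ Finset.univ : Finset (V × V)),
          η z.1 * η z.2 * ((1 - Real.exp (-((G.dist z.1 z.2 : ℝ) * t))) * t ^ (-β - 1)))
          = ∑ z ∈ (Finset.univ ×ˢ Finset.univ : Finset (V × V)),
            (t ^ (-β - 1) * (η z.1 * η z.2)
              - t ^ (-β - 1) * (η z.1 * η z.2 * Real.exp (-t) ^ G.dist z.1 z.2)) :=
          Finset.sum_congr rfl fun z _ => by rw [hexp (G.dist z.1 z.2)]; ring
        _ = (∑ z ∈ (Finset.univ ×ˢ Finset.univ : Finset (V × V)),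
              t ^ (-β - 1) * (η z.1 * η z.2))
            - ∑ z ∈ (Finset.univ ×ˢ Finset.univ : Finset (V × V)),
              t ^ (-β - 1) * (η z.1 * η z.2 * Real.exp (-t) ^ G.dist z.1 z.2) :=
          Finset.sum_sub_distrib _ _
        _ = t ^ (-β - 1) * ((∑ x, η x) * (∑ y, η y))
            - t ^ (-β - 1) * bform (fun x y => Real.exp (-t) ^ G.dist x y) η η := by
          congr 1
          · rw [← Finset.mul_sum]
            congr 1
            rw [Finset.sum_product]
            exact (Finset.sum_mul_sum _ _ _ _).symm
          · rw [← Finset.mul_sum]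
            congr 1
            rw [bform, ← Finset.sum_product']
    rw [hsplit, hsum]
    have hrp := Real.rpow_pos_of_pos ht0 (-β - 1)
    nlinarith
  have h4 : bform (fun x y => (G.dist x y : ℝ) ^ β) η η * C ≤ 0 := by
    rw [h2]
    exact setIntegral_nonpos measurableSet_Ioi h3
  nlinarith

lemma tree_M_posSemidef {G : SimpleGraph V} (hG : G.IsTree) {β : ℝ} (hβ0 : 0 < β) (hβ1 : β < 1)
    (r : V) :
    Matrix.PosSemidef (Matrix.of fun x y : V =>
      ((G.dist r x : ℝ) ^ β + (G.dist r y : ℝ) ^ β - (G.dist x y : ℝ) ^ β) / 2) := by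
  set Kφ : V → V → ℝ := fun x y => (G.dist x y : ℝ) ^ β with hKφD
  have hsymm : ∀ x y, Kφ x y = Kφ y x := fun x y => by
    simp only [hKφD]
    rw [SimpleGraph.dist_comm]
  have hKrr : Kφ r r = 0 := by
    simp only [hKφD, SimpleGraph.dist_self, Nat.cast_zero]
    exact Real.zero_rpow hβ0.ne'
  refine Matrix.PosSemidef.of_dotProduct_mulVec_nonneg ?_ ?_
  · show _ = _
    ext x y
    simp only [Matrix.conjTranspose_apply, Matrix.of_apply, star_trivial]
    rw [SimpleGraph.dist_comm (u := y) (v := x)]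
    ring
  · intro ξ
    set T := ∑ z, ξ z with hT
    set A := ∑ z, ξ z * Kφ z r with hA
    set Q := bform Kφ ξ ξ with hQ
    set η : V → ℝ := fun z => ξ z + sngl r (-T) z with hη
    have hηsum : ∑ z, η z = 0 := by
      simp only [hη, Finset.sum_add_distrib]
      simp [sngl, Finset.sum_ite_eq', ← hT]
    have hneg := tree_negtype hG hβ0 hβ1 η hηsum
    have hquad : bform Kφ η η = Q + 2 * ((-T) * A) + (-T) * (-T) * Kφ r r := by
      rw [hη, bform_quad Kφ hsymm, bform_sngl_right, bform_sngl_sngl, hQ, hA]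
    rw [hKrr] at hquad
    have hcast : ∀ x, Kφ r x = Kφ x r := fun x => hsymm r x
    have hrw : dotProduct (star ξ)
        ((Matrix.of fun x y : V =>
          ((G.dist r x : ℝ) ^ β + (G.dist r y : ℝ) ^ β - (G.dist x y : ℝ) ^ β) / 2).mulVec ξ)
        = ∑ x, ξ x * ∑ y, ((Kφ r x + Kφ r y - Kφ x y) / 2) * ξ y := by
      simp only [dotProduct, Matrix.mulVec, Matrix.of_apply, Pi.star_apply, star_trivial,
        hKφD]
    rw [hrw]
    have step1 : (∑ x, ξ x * ∑ y, ((Kφ r x + Kφ r y - Kφ x y) / 2) * ξ y)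
        = ((∑ x, ∑ y, (ξ x * Kφ x r) * ξ y) + (∑ x, ∑ y, ξ x * (ξ y * Kφ y r))
            - ∑ x, ∑ y, ξ x * ξ y * Kφ x y) / 2 := by
      have hx : ∀ x : V, ξ x * ∑ y, ((Kφ r x + Kφ r y - Kφ x y) / 2) * ξ y
          = (∑ y, ((ξ x * Kφ x r) * ξ y + ξ x * (ξ y * Kφ y r) - ξ x * ξ y * Kφ x y)) / 2 := by
        intro x
        rw [Finset.mul_sum, Finset.sum_div]
        refine Finset.sum_congr rfl fun y _ => ?_
        rw [hcast x, hcast y]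
        ring
      rw [Finset.sum_congr rfl fun x _ => hx x, ← Finset.sum_div]
      congr 1
      simp [Finset.sum_add_distrib, Finset.sum_sub_distrib]
    have e1 : (∑ x, ∑ y, (ξ x * Kφ x r) * ξ y) = A * T :=
      (Finset.sum_mul_sum _ _ _ _).symm
    have e2 : (∑ x, ∑ y, ξ x * (ξ y * Kφ y r)) = T * A :=
      (Finset.sum_mul_sum _ _ _ _).symm
    have e3 : (∑ x, ∑ y, ξ x * ξ y * Kφ x y) = Q := by rw [hQ, bform]
    rw [step1, e1, e2, e3]
    linarith

end TreeEmbedHelpers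

/-- For any real `p > 2` and any finite tree `T` with tree metric `d`,
there is an `N` and a power-`p` embedding of `T` into `ℝ^N`: a map `f` from the vertices
of `T` to `EuclideanSpace ℝ (Fin N)` with `‖f x - f y‖ ^ p = d(x, y)` for all `x y`. -/
theorem tree_power_p_embedding_of_two_lt (p : ℝ) (hp : 2 < p)
    {V : Type*} [Fintype V] (G : SimpleGraph V) (hG : G.IsTree) :
    ∃ (N : ℕ) (f : V → EuclideanSpace ℝ (Fin N)),
      ∀ x y : V, ‖f x - f y‖ ^ p = (G.dist x y : ℝ) := by
  classical
  have hp0 : (0:ℝ) < p := by linarith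
  set β : ℝ := 2 / p with hβ
  have hβ0 : 0 < β := by positivity
  have hβ1 : β < 1 := by rw [hβ, div_lt_one hp0]; linarith
  obtain ⟨r⟩ : Nonempty V := hG.isConnected.nonempty
  open scoped MatrixOrder in
  obtain ⟨B, hB⟩ := CStarAlgebra.nonneg_iff_eq_star_mul_self.mp
    (tree_M_posSemidef hG hβ0 hβ1 r).nonneg
  set N := Fintype.card V with hN
  set e : Fin N ≃ V := (Fintype.equivFin V).symm with he
  set fv : V → EuclideanSpace ℝ (Fin N) := fun x => WithLp.toLp 2 (fun i => B (e i) x) with hfv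
  refine ⟨N, fv, fun x y => ?_⟩
  have hM : ∀ x y : V, (∑ w, B w x * B w y)
      = ((G.dist r x : ℝ) ^ β + (G.dist r y : ℝ) ^ β - (G.dist x y : ℝ) ^ β) / 2 := by
    intro a b
    have h := congrFun (congrFun hB a) b
    rw [Matrix.mul_apply] at h
    simp only [Matrix.star_eq_conjTranspose, Matrix.conjTranspose_apply, star_trivial, Matrix.of_apply] at h
    exact h.symm
  have h1 : ‖fv x - fv y‖ = Real.sqrt (∑ i, (B (e i) x - B (e i) y) ^ 2) := by
    rw [EuclideanSpace.norm_eq]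
    congr 1
    refine Finset.sum_congr rfl fun i _ => ?_
    have hsub : (fv x - fv y) i = B (e i) x - B (e i) y := by simp [hfv]
    rw [hsub, Real.norm_eq_abs, sq_abs]
  have h2 : (∑ i, (B (e i) x - B (e i) y) ^ 2) = ∑ w, (B w x - B w y) ^ 2 :=
    Equiv.sum_comp e (fun w => (B w x - B w y) ^ 2)
  have h3 : (∑ w, (B w x - B w y) ^ 2) = (G.dist x y : ℝ) ^ β := by
    have hxx := hM x x
    have hyy := hM y y
    have hxy := hM x y
    have hzx : ((G.dist x x : ℝ)) ^ β = 0 := by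
      rw [SimpleGraph.dist_self]
      exact_mod_cast Real.zero_rpow hβ0.ne'
    have hzy : ((G.dist y y : ℝ)) ^ β = 0 := by
      rw [SimpleGraph.dist_self]
      exact_mod_cast Real.zero_rpow hβ0.ne'
    have hexp : (∑ w, (B w x - B w y) ^ 2)
        = (∑ w, B w x * B w x) + (∑ w, B w y * B w y) - 2 * ∑ w, B w x * B w y := by
      calc (∑ w, (B w x - B w y) ^ 2)
          = ∑ w, (B w x * B w x + B w y * B w y - 2 * (B w x * B w y)) :=
            Finset.sum_congr rfl fun w _ => by ring
        _ = _ := by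
            rw [Finset.sum_sub_distrib, Finset.sum_add_distrib, ← Finset.mul_sum]
    rw [hexp, hxx, hyy, hxy, hzx, hzy]
    ring
  have hd0 : (0:ℝ) ≤ (G.dist x y : ℝ) := Nat.cast_nonneg _
  have hnorm : ‖fv x - fv y‖ = ((G.dist x y : ℝ) ^ β) ^ ((2:ℝ)⁻¹) := by
    rw [h1, h2, h3, Real.sqrt_eq_rpow, one_div]
  rw [hnorm, ← Real.rpow_mul (Real.rpow_nonneg hd0 β), ← Real.rpow_mul hd0]
  rw [show β * ((2:ℝ)⁻¹ * p) = 1 by rw [hβ]; field_simp]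
  exact Real.rpow_one _
end
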